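/- Let N, R be ℓ×ℓ real matrices and set G = N Nᵀ + R − Rᵀ. Define the matrix-valued kernel K(t, s) = exp(−((t − s)/2) G) when t ≥ s, and K(t, s) = exp(−((s − t)/2) Gᵀ) when t < s. Then K is nonnegative definite: for every m, all times t₁, …, t_m ∈ ℝ, and all vectors v₁, …, v_m ∈ ℝ^ℓ, one has ∑_{i,j} v_iᵀ K(t_i, t_j) v_j ≥ 0. (Equivalently, the PEG covariance kernel C_PEG(τ; N, R) = exp(−(|τ|/2) G) for τ ≥ 0, transposed for τ < 0, is the covariance kernel of a stationary Gaussian process.) -/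

import Mathlib

open Matrix

namespace PEGaux

open NormedSpace

attribute [local instance] Matrix.linftyOpNormedRing Matrix.linftyOpNormedAlgebra

variable {ℓ : ℕ}

/-- The PEG kernel. -/
noncomputable def PK (G : Matrix (Fin ℓ) (Fin ℓ) ℝ) (a b : ℝ) : Matrix (Fin ℓ) (Fin ℓ) ℝ :=
  if b ≤ a then exp ((-((a - b) / 2)) • G) else exp ((-((b - a) / 2)) • Gᵀ)

variable (G : Matrix (Fin ℓ) (Fin ℓ) ℝ)

lemma exp_smul_add (a b : ℝ) : exp ((a + b) • G) = exp (a • G) * exp (b • G) := by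
  rw [add_smul]
  exact Matrix.exp_add_of_commute _ _ (((Commute.refl G).smul_left a).smul_right b)

lemma exp_smul_transpose (c : ℝ) : exp (c • Gᵀ) = (exp (c • G))ᵀ := by
  rw [← Matrix.transpose_smul, Matrix.exp_transpose]

lemma PK_of_le {a b : ℝ} (h : b ≤ a) : PK G a b = exp ((-((a - b) / 2)) • G) :=
  if_pos h

lemma PK_self (a : ℝ) : PK G a a = 1 := by
  rw [PK_of_le G le_rfl]
  simp [NormedSpace.exp_zero]

lemma PK_of_le' {a b : ℝ} (h : b ≤ a) : PK G b a = (PK G a b)ᵀ := by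
  rw [PK_of_le G h, PK]
  split_ifs with h'
  · have : a = b := le_antisymm (le_antisymm h h' ▸ le_rfl) h
    subst this
    simp [NormedSpace.exp_zero]
  · rw [exp_smul_transpose]

lemma PK_mul {a b c : ℝ} (hab : a ≤ b) (hbc : b ≤ c) :
    PK G c a = PK G c b * exp ((-((b - a) / 2)) • G) := by
  rw [PK_of_le G (hab.trans hbc), PK_of_le G hbc, ← exp_smul_add]
  congr 1
  ring_nf

lemma quad_nonneg (N R : Matrix (Fin ℓ) (Fin ℓ) ℝ) (y : Fin ℓ → ℝ) :
    0 ≤ y ⬝ᵥ (N * Nᵀ + R - Rᵀ).mulVec y := by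
  have h1 : y ⬝ᵥ (N * Nᵀ).mulVec y = (Nᵀ.mulVec y) ⬝ᵥ (Nᵀ.mulVec y) := by
    rw [← Matrix.mulVec_mulVec, Matrix.dotProduct_mulVec]
    congr 1
    rw [← Matrix.transpose_transpose N, Matrix.vecMul_transpose, Matrix.transpose_transpose]
  have h2 : y ⬝ᵥ Rᵀ.mulVec y = y ⬝ᵥ R.mulVec y := by
    rw [Matrix.dotProduct_mulVec, Matrix.vecMul_transpose, dotProduct_comm]
  have h3 : y ⬝ᵥ (N * Nᵀ + R - Rᵀ).mulVec y
      = y ⬝ᵥ (N * Nᵀ).mulVec y + y ⬝ᵥ R.mulVec y - y ⬝ᵥ Rᵀ.mulVec y := by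
    rw [Matrix.sub_mulVec, Matrix.add_mulVec, dotProduct_sub, dotProduct_add]
  rw [h3, h2, h1]
  have : 0 ≤ (Nᵀ.mulVec y) ⬝ᵥ (Nᵀ.mulVec y) :=
    Finset.sum_nonneg fun i _ => mul_self_nonneg _
  linarith

lemma contraction (hG : ∀ y : Fin ℓ → ℝ, 0 ≤ y ⬝ᵥ G.mulVec y) {c : ℝ} (hc : c ≤ 0)
    (x : Fin ℓ → ℝ) :
    (exp (c • G)).mulVec x ⬝ᵥ (exp (c • G)).mulVec x ≤ x ⬝ᵥ x := by
  set y : ℝ → Fin ℓ → ℝ := fun c => (exp (c • G)).mulVec x with hy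
  let L : Matrix (Fin ℓ) (Fin ℓ) ℝ →ₗ[ℝ] (Fin ℓ → ℝ) :=
    { toFun := fun M => M.mulVec x
      map_add' := fun A B => Matrix.add_mulVec A B x
      map_smul' := fun a A => Matrix.smul_mulVec a A x }
  have hderiv : ∀ c : ℝ, HasDerivAt y (G.mulVec (y c)) c := by
    intro c
    have h1 : HasDerivAt (fun u : ℝ => exp (u • G)) (G * exp (c • G)) c :=
      hasDerivAt_exp_smul_const' G c
    have h2 := (L.toContinuousLinearMap.hasFDerivAt (x := exp (c • G))).comp_hasDerivAt c h1
    exact h2.congr_deriv (Matrix.mulVec_mulVec x G (exp (c • G))).symm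
  have hf : ∀ c : ℝ, HasDerivAt (fun c => y c ⬝ᵥ y c)
      (2 * (y c ⬝ᵥ G.mulVec (y c))) c := by
    intro c
    have hcomp : ∀ i, HasDerivAt (fun c => y c i) ((G.mulVec (y c)) i) c :=
      fun i => hasDerivAt_pi.mp (hderiv c) i
    have h3 : HasDerivAt (fun c => ∑ i, y c i * y c i)
        (∑ i, ((G.mulVec (y c)) i * y c i + y c i * (G.mulVec (y c)) i)) c :=
      HasDerivAt.fun_sum fun i _ => (hcomp i).mul (hcomp i)
    convert h3 using 1
    all_goals simp only [dotProduct, Finset.mul_sum, ← Finset.sum_add_distrib]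
    exact Finset.sum_congr rfl fun i _ => by ring
  have hmono : Monotone (fun c => y c ⬝ᵥ y c) :=
    monotone_of_hasDerivAt_nonneg hf (fun c => mul_nonneg (by norm_num) (hG (y c)))
  have h0 := hmono hc
  simpa [hy] using h0

/-- The key nonnegativity lemma, for monotone time sequences. -/
lemma key (hG : ∀ y : Fin ℓ → ℝ, 0 ≤ y ⬝ᵥ G.mulVec y) :
    ∀ (m : ℕ) (t : Fin m → ℝ), Monotone t → ∀ (v : Fin m → Fin ℓ → ℝ),
      0 ≤ ∑ i, ∑ j, v i ⬝ᵥ (PK G (t i) (t j)).mulVec (v j) := by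
  intro m
  induction m with
  | zero => intro t _ v; simp
  | succ m ih =>
    intro t ht v
    match m with
    | 0 =>
      simp only [Fin.sum_univ_succ, Finset.univ_eq_empty, Finset.sum_empty, add_zero,
        PK_self, Matrix.one_mulVec]
      exact Finset.sum_nonneg fun i _ => mul_self_nonneg _
    | Nat.succ m' =>
      -- times: t 0 ≤ t 1 ≤ ...
      set E : Matrix (Fin ℓ) (Fin ℓ) ℝ := exp ((-((t 1 - t 0) / 2)) • G) with hE
      set u : Fin ℓ → ℝ := E.mulVec (v 0) with hu
      set w : Fin (m' + 1) → Fin ℓ → ℝ :=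
        fun j => v j.succ + if j = 0 then u else 0 with hw
      have ht01 : t 0 ≤ t 1 := ht (by norm_num)
      have htail : Monotone (t ∘ Fin.succ) := fun i j hij => ht (Fin.succ_le_succ_iff.mpr hij)
      have h1eq : (0 : Fin (m' + 1)).succ = 1 := rfl
      -- kernel identities
      have hrow : ∀ i : Fin (m' + 1),
          (PK G (t i.succ) (t 0)).mulVec (v 0) = (PK G (t i.succ) (t 1)).mulVec u := by
        intro i
        rw [hu, Matrix.mulVec_mulVec, ← PK_mul G ht01 (ht (Fin.succ_le_succ_iff.mpr (Fin.zero_le i)))]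
      have hcol : ∀ j : Fin (m' + 1),
          v 0 ⬝ᵥ (PK G (t 0) (t j.succ)).mulVec (v j.succ)
            = u ⬝ᵥ (PK G (t 1) (t j.succ)).mulVec (v j.succ) := by
        intro j
        have h1j : t 1 ≤ t j.succ := ht (Fin.succ_le_succ_iff.mpr (Fin.zero_le j))
        have hKt : PK G (t 0) (t j.succ) = Eᵀ * PK G (t 1) (t j.succ) := by
          rw [PK_of_le' G (ht01.trans h1j), PK_of_le' G h1j,
            PK_mul G ht01 h1j, Matrix.transpose_mul]
        rw [hKt, ← Matrix.mulVec_mulVec, Matrix.dotProduct_mulVec, Matrix.vecMul_transpose, hu]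
      -- the main identity
      have hiden : ∑ i, ∑ j, v i ⬝ᵥ (PK G (t i) (t j)).mulVec (v j)
          = (∑ i, ∑ j, w i ⬝ᵥ (PK G ((t ∘ Fin.succ) i) ((t ∘ Fin.succ) j)).mulVec (w j))
            + (v 0 ⬝ᵥ v 0 - u ⬝ᵥ u) := by
        set d : Fin (m' + 1) → Fin ℓ → ℝ := fun i => if i = 0 then u else 0 with hd
        have hL : ∑ i, ∑ j, v i ⬝ᵥ (PK G (t i) (t j)).mulVec (v j)
            = (v 0 ⬝ᵥ v 0
                + ∑ j : Fin (m' + 1), u ⬝ᵥ (PK G (t 1) (t j.succ)).mulVec (v j.succ))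
              + ∑ i : Fin (m' + 1),
                  (v i.succ ⬝ᵥ (PK G (t i.succ) (t 1)).mulVec u
                    + ∑ j : Fin (m' + 1),
                        v i.succ ⬝ᵥ (PK G (t i.succ) (t j.succ)).mulVec (v j.succ)) := by
          rw [Fin.sum_univ_succ]
          congr 1
          · rw [Fin.sum_univ_succ, PK_self, Matrix.one_mulVec]
            congr 1
            exact Finset.sum_congr rfl fun j _ => hcol j
          · refine Finset.sum_congr rfl fun i _ => ?_
            rw [Fin.sum_univ_succ, hrow i]
        have hsplit : ∀ i j : Fin (m' + 1),
            w i ⬝ᵥ (PK G (t i.succ) (t j.succ)).mulVec (w j)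
            = v i.succ ⬝ᵥ (PK G (t i.succ) (t j.succ)).mulVec (v j.succ)
              + (d i ⬝ᵥ (PK G (t i.succ) (t j.succ)).mulVec (v j.succ)
              + (v i.succ ⬝ᵥ (PK G (t i.succ) (t j.succ)).mulVec (d j)
              + d i ⬝ᵥ (PK G (t i.succ) (t j.succ)).mulVec (d j))) := by
          intro i j
          show (v i.succ + d i) ⬝ᵥ (PK G (t i.succ) (t j.succ)).mulVec (v j.succ + d j) = _
          rw [Matrix.mulVec_add, dotProduct_add, add_dotProduct,
            add_dotProduct]
          ring
        have cB : (∑ i : Fin (m' + 1), ∑ j : Fin (m' + 1),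
              d i ⬝ᵥ (PK G (t i.succ) (t j.succ)).mulVec (v j.succ))
            = ∑ j : Fin (m' + 1), u ⬝ᵥ (PK G (t 1) (t j.succ)).mulVec (v j.succ) := by
          rw [Finset.sum_eq_single (0 : Fin (m' + 1))]
          · simp [hd]
          · intro b _ hb
            simp [hd, hb]
          · intro h; exact absurd (Finset.mem_univ _) h
        have cC : (∑ i : Fin (m' + 1), ∑ j : Fin (m' + 1),
              v i.succ ⬝ᵥ (PK G (t i.succ) (t j.succ)).mulVec (d j))
            = ∑ i : Fin (m' + 1), v i.succ ⬝ᵥ (PK G (t i.succ) (t 1)).mulVec u := by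
          refine Finset.sum_congr rfl fun i _ => ?_
          rw [Finset.sum_eq_single (0 : Fin (m' + 1))]
          · simp [hd]
          · intro b _ hb
            simp [hd, hb]
          · intro h; exact absurd (Finset.mem_univ _) h
        have cD : (∑ i : Fin (m' + 1), ∑ j : Fin (m' + 1),
              d i ⬝ᵥ (PK G (t i.succ) (t j.succ)).mulVec (d j))
            = u ⬝ᵥ u := by
          rw [Finset.sum_eq_single (0 : Fin (m' + 1))]
          · rw [Finset.sum_eq_single (0 : Fin (m' + 1))]
            · have h11 : PK G (t 1) (t 1) = 1 := PK_self G _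
              simp [hd, h11, Matrix.one_mulVec]
            · intro b _ hb
              simp [hd, hb]
            · intro h; exact absurd (Finset.mem_univ _) h
          · intro b _ hb
            simp [hd, hb]
          · intro h; exact absurd (Finset.mem_univ _) h
        have hR : ∑ i, ∑ j, w i ⬝ᵥ (PK G ((t ∘ Fin.succ) i) ((t ∘ Fin.succ) j)).mulVec (w j)
            = (∑ i : Fin (m' + 1), ∑ j : Fin (m' + 1),
                  v i.succ ⬝ᵥ (PK G (t i.succ) (t j.succ)).mulVec (v j.succ))
              + ((∑ j : Fin (m' + 1), u ⬝ᵥ (PK G (t 1) (t j.succ)).mulVec (v j.succ))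
              + ((∑ i : Fin (m' + 1), v i.succ ⬝ᵥ (PK G (t i.succ) (t 1)).mulVec u)
              + u ⬝ᵥ u)) := by
          simp only [Function.comp_apply]
          rw [← cB, ← cC, ← cD]
          simp only [← Finset.sum_add_distrib]
          exact Finset.sum_congr rfl fun i _ => Finset.sum_congr rfl fun j _ => hsplit i j
        rw [hL, hR]
        simp only [Finset.sum_add_distrib]
        ring
      rw [hiden]
      have h1 := ih (t ∘ Fin.succ) htail w
      have h2 := contraction G hG (c := -((t 1 - t 0) / 2)) (by linarith) (v 0)
      rw [← hE, ← hu] at h2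
      linarith

end PEGaux

/-- **The PEG covariance kernel is nonnegative definite.**  With `G = N Nᵀ + R - Rᵀ` and
`K(t, s) = exp(-((t-s)/2) G)` for `t ≥ s`, `K(t, s) = exp(-((s-t)/2) Gᵀ)` for `t < s`,
one has `∑_{i,j} vᵢᵀ K(tᵢ, tⱼ) vⱼ ≥ 0` for all times `t` and vectors `v`. -/
theorem peg_kernel_nonneg_definite
    {ℓ : ℕ} (N R : Matrix (Fin ℓ) (Fin ℓ) ℝ) :
    ∀ (m : ℕ) (t : Fin m → ℝ) (v : Fin m → Fin ℓ → ℝ),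
      0 ≤ ∑ i, ∑ j, v i ⬝ᵥ
        ((if t j ≤ t i then
            NormedSpace.exp ((-((t i - t j) / 2)) • (N * Nᵀ + R - Rᵀ))
          else
            NormedSpace.exp ((-((t j - t i) / 2)) • (N * Nᵀ + R - Rᵀ)ᵀ)).mulVec (v j)) := by
  intro m t v
  show 0 ≤ ∑ i, ∑ j, v i ⬝ᵥ (PEGaux.PK (N * Nᵀ + R - Rᵀ) (t i) (t j)).mulVec (v j)
  set f : Fin m → Fin m → ℝ :=
    fun i j => v i ⬝ᵥ (PEGaux.PK (N * Nᵀ + R - Rᵀ) (t i) (t j)).mulVec (v j) with hf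
  set σ := Tuple.sort t with hσ
  have hkey := PEGaux.key (N * Nᵀ + R - Rᵀ) (PEGaux.quad_nonneg N R) m (t ∘ σ)
    (Tuple.monotone_sort t) (v ∘ σ)
  have hsum : (∑ i, ∑ j, f (σ i) (σ j)) = ∑ i, ∑ j, f i j :=
    calc ∑ i, ∑ j, f (σ i) (σ j) = ∑ i, ∑ j, f (σ i) j :=
          Finset.sum_congr rfl fun i _ => Equiv.sum_comp σ (f (σ i))
      _ = ∑ i, ∑ j, f i j := Equiv.sum_comp σ (fun i => ∑ j, f i j)
  rw [← hsum]
  exact hkey
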